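/- Let $1 \le q \le 2$ and let $(\phi_i)_{i\in\mathbb{N}}$ be an orthonormal basis (or frame) of a Hilbert space $U$, $w_i \ge w_{\min} > 0$, and $\mathcal{R}_q(u) = \sum_i w_i|\langle\phi_i,u\rangle|^q$. If $(u_k)$ converges weakly to $u$ in $U$ and $\mathcal{R}_q(u_k) \to \mathcal{R}_q(u) < \infty$, then $\mathcal{R}_q(u_k - u) \to 0$. -/

import Mathlib

open scoped InnerProductSpace ENNReal Topology

open Filter MeasureTheory

private lemma rpow_sub_le_aux {q : ℝ} (hq1 : 1 ≤ q) (hq2 : q ≤ 2) (s t : ℝ) :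
    |s - t| ^ q ≤ 4 * (|s| ^ q + |t| ^ q) := by
  have hq0 : 0 ≤ q := le_trans zero_le_one hq1
  have h24 : (2:ℝ) ^ q ≤ 4 := by
    have h := Real.rpow_le_rpow_of_exponent_le (by norm_num : (1:ℝ) ≤ 2) hq2
    have h4 : (2:ℝ) ^ (2:ℝ) = 4 := by
      rw [show (2:ℝ) = ((2:ℕ):ℝ) by norm_num, Real.rpow_natCast]; norm_num
    rw [h4] at h
    exact h
  have htri : |s - t| ≤ |s| + |t| := by
    calc |s - t| = |s + (-t)| := by rw [sub_eq_add_neg]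
    _ ≤ |s| + |-t| := abs_add_le _ _
    _ = |s| + |t| := by rw [abs_neg]
  have key : ∀ r : ℝ, 0 ≤ r → |s - t| ≤ 2 * r → |s - t| ^ q ≤ 4 * r ^ q := by
    intro r hr h2r
    calc |s - t| ^ q ≤ (2 * r) ^ q :=
          Real.rpow_le_rpow (abs_nonneg _) h2r hq0
    _ = 2 ^ q * r ^ q := Real.mul_rpow (by norm_num) hr
    _ ≤ 4 * r ^ q := mul_le_mul_of_nonneg_right h24 (Real.rpow_nonneg hr q)
  rcases le_total |s| |t| with h | h
  · have := key |t| (abs_nonneg _) (by linarith)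
    have hs : 0 ≤ |s| ^ q := Real.rpow_nonneg (abs_nonneg _) q
    linarith
  · have := key |s| (abs_nonneg _) (by linarith)
    have ht : 0 ≤ |t| ^ q := Real.rpow_nonneg (abs_nonneg _) q
    linarith

theorem Rq_radon_riesz
    {U : Type*} [NormedAddCommGroup U] [InnerProductSpace ℝ U] [CompleteSpace U]
    (b : HilbertBasis ℕ ℝ U)
    (q : ℝ) (hq1 : 1 ≤ q) (hq2 : q ≤ 2)
    (w : ℕ → ℝ) (wmin : ℝ) (hwmin : 0 < wmin) (hw : ∀ i, wmin ≤ w i)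
    (R : U → ℝ≥0∞) (hR : ∀ v : U, R v = ∑' i, ENNReal.ofReal (w i * |⟪b i, v⟫_ℝ| ^ q))
    (u : ℕ → U) (x : U)
    (hweak : ∀ v : U, Filter.Tendsto (fun k => ⟪v, u k⟫_ℝ) Filter.atTop (𝓝 ⟪v, x⟫_ℝ))
    (hfin : R x < ⊤)
    (hconv : Filter.Tendsto (fun k => R (u k)) Filter.atTop (𝓝 (R x))) :
    Filter.Tendsto (fun k => R (u k - x)) Filter.atTop (𝓝 0) := by
  have hq0 : 0 ≤ q := le_trans zero_le_one hq1
  set a : ℕ → ℕ → ℝ := fun k i => ⟪b i, u k⟫_ℝ with ha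
  set c : ℕ → ℝ := fun i => ⟪b i, x⟫_ℝ with hc
  have hwpos : ∀ i, 0 ≤ w i := fun i => le_trans hwmin.le (hw i)
  -- the Brezis–Lieb type auxiliary sequence
  set g : ℕ → ℕ → ℝ≥0∞ := fun k i =>
    ENNReal.ofReal (w i * (4 * |a k i| ^ q + 4 * |c i| ^ q - |a k i - c i| ^ q)) with hg
  have hinner : ∀ k i, ⟪b i, u k - x⟫_ℝ = a k i - c i := by
    intro k i; simp [ha, hc, inner_sub_right]
  have hnonneg : ∀ k i, 0 ≤ 4 * |a k i| ^ q + 4 * |c i| ^ q - |a k i - c i| ^ q := by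
    intro k i
    have := rpow_sub_le_aux hq1 hq2 (a k i) (c i)
    linarith
  -- per-index identity
  have hident : ∀ k i,
      g k i + ENNReal.ofReal (w i * |⟪b i, u k - x⟫_ℝ| ^ q)
        = 4 * ENNReal.ofReal (w i * |a k i| ^ q) + 4 * ENNReal.ofReal (w i * |c i| ^ q) := by
    intro k i
    rw [hinner k i]
    have hD : 0 ≤ w i * |a k i - c i| ^ q :=
      mul_nonneg (hwpos i) (Real.rpow_nonneg (abs_nonneg _) q)
    have hG : 0 ≤ w i * (4 * |a k i| ^ q + 4 * |c i| ^ q - |a k i - c i| ^ q) :=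
      mul_nonneg (hwpos i) (hnonneg k i)
    have hA : 0 ≤ w i * |a k i| ^ q :=
      mul_nonneg (hwpos i) (Real.rpow_nonneg (abs_nonneg _) q)
    have hB : 0 ≤ w i * |c i| ^ q :=
      mul_nonneg (hwpos i) (Real.rpow_nonneg (abs_nonneg _) q)
    rw [hg]
    rw [← ENNReal.ofReal_add hG hD]
    rw [show w i * (4 * |a k i| ^ q + 4 * |c i| ^ q - |a k i - c i| ^ q)
          + w i * |a k i - c i| ^ q
        = 4 * (w i * |a k i| ^ q) + 4 * (w i * |c i| ^ q) by ring]
    rw [ENNReal.ofReal_add (by positivity) (by positivity),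
      ENNReal.ofReal_mul (by norm_num : (0:ℝ) ≤ 4),
      ENNReal.ofReal_mul (by norm_num : (0:ℝ) ≤ 4)]
    norm_num
  -- summed identity
  have hsum : ∀ k, (∑' i, g k i) + R (u k - x) = 4 * R (u k) + 4 * R x := by
    intro k
    rw [hR (u k - x), hR (u k), hR x, ← ENNReal.tsum_add, ← ENNReal.tsum_mul_left,
      ← ENNReal.tsum_mul_left, ← ENNReal.tsum_add]
    exact tsum_congr fun i => hident k i
  -- pointwise convergence of the coefficients
  have hptA : ∀ i, Tendsto (fun k => |a k i| ^ q) atTop (𝓝 (|c i| ^ q)) := by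
    intro i
    have h1 : Tendsto (fun k => a k i) atTop (𝓝 (c i)) := hweak (b i)
    have h2 : Tendsto (fun k => |a k i|) atTop (𝓝 |c i|) := h1.abs
    exact (Real.continuousAt_rpow_const _ q (Or.inr hq0)).tendsto.comp h2
  have hptD : ∀ i, Tendsto (fun k => |a k i - c i| ^ q) atTop (𝓝 0) := by
    intro i
    have h1 : Tendsto (fun k => a k i - c i) atTop (𝓝 0) := by
      simpa [ha, hc] using (hweak (b i)).sub_const (c i)
    have h2 : Tendsto (fun k => |a k i - c i|) atTop (𝓝 0) := by
      simpa using h1.abs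
    have h3 := (Real.continuousAt_rpow_const 0 q (Or.inr hq0)).tendsto.comp h2
    simpa [Function.comp_def, Real.zero_rpow (by linarith : q ≠ 0)] using h3
  -- pointwise limit of g
  have hptg : ∀ i, Tendsto (fun k => g k i) atTop
      (𝓝 (8 * ENNReal.ofReal (w i * |c i| ^ q))) := by
    intro i
    have hrr : Tendsto (fun k => w i * (4 * |a k i| ^ q + 4 * |c i| ^ q - |a k i - c i| ^ q))
        atTop (𝓝 (w i * (4 * |c i| ^ q + 4 * |c i| ^ q - 0))) := by
      exact (((hptA i).const_mul 4).add_const (4 * |c i| ^ q) |>.sub (hptD i)).const_mul (w i)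
    have := (ENNReal.continuous_ofReal.tendsto _).comp hrr
    have heq : ENNReal.ofReal (w i * (4 * |c i| ^ q + 4 * |c i| ^ q - 0))
        = 8 * ENNReal.ofReal (w i * |c i| ^ q) := by
      rw [show w i * (4 * |c i| ^ q + 4 * |c i| ^ q - 0) = 8 * (w i * |c i| ^ q) by ring,
        ENNReal.ofReal_mul (by norm_num : (0:ℝ) ≤ 8)]
      norm_num
    rw [← heq]
    exact this
  -- Fatou via the counting measure
  have hfatou : (8 : ℝ≥0∞) * R x ≤ atTop.liminf fun k => ∑' i, g k i := by
    have hmeas : ∀ k, Measurable (g k) := fun k => measurable_of_countable _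
    have := MeasureTheory.lintegral_liminf_le (μ := Measure.count) (u := atTop) hmeas
    simp_rw [MeasureTheory.lintegral_count] at this
    calc (8 : ℝ≥0∞) * R x = ∑' i, atTop.liminf fun k => g k i := by
          rw [hR x, ← ENNReal.tsum_mul_left]
          exact tsum_congr fun i => ((hptg i).liminf_eq).symm
    _ ≤ atTop.liminf fun k => ∑' i, g k i := this
  -- the limit of the sum
  have hS : Tendsto (fun k => 4 * R (u k) + 4 * R x) atTop (𝓝 (8 * R x)) := by
    have h1 : Tendsto (fun k => 4 * R (u k)) atTop (𝓝 (4 * R x)) :=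
      ENNReal.Tendsto.const_mul hconv (Or.inr (by norm_num))
    have := h1.add_const (4 * R x)
    rw [show (4 : ℝ≥0∞) * R x + 4 * R x = 8 * R x by ring] at this
    exact this
  have hm : (8 : ℝ≥0∞) * R x ≠ ⊤ := ENNReal.mul_ne_top (by norm_num) hfin.ne
  set m : ℝ≥0∞ := 8 * R x with hmdef
  -- conclude
  rw [ENNReal.tendsto_nhds_zero]
  intro ε hε
  have hε2 : 0 < ε / 2 := ENNReal.half_pos hε.ne'
  have hub : ∀ᶠ k in atTop, 4 * R (u k) + 4 * R x < m + ε / 2 :=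
    hS.eventually_lt_const (ENNReal.lt_add_right hm hε2.ne')
  have hlb : ∀ᶠ k in atTop, m ≤ (∑' i, g k i) + ε / 2 := by
    rcases eq_or_ne m 0 with h0 | h0
    · filter_upwards with k; simp [h0]
    · have hlt : m - ε / 2 < atTop.liminf fun k => ∑' i, g k i :=
        lt_of_lt_of_le (ENNReal.sub_lt_self hm h0 hε2.ne') hfatou
      filter_upwards [Filter.eventually_lt_of_lt_liminf hlt] with k hk
      exact tsub_le_iff_right.mp hk.le
  filter_upwards [hub, hlb] with k hk1 hk2
  have hkey : R (u k - x) + m ≤ ε + m := by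
    calc R (u k - x) + m ≤ R (u k - x) + ((∑' i, g k i) + ε / 2) :=
          add_le_add_right hk2 _
    _ = ((∑' i, g k i) + R (u k - x)) + ε / 2 := by ring
    _ = (4 * R (u k) + 4 * R x) + ε / 2 := by rw [hsum k]
    _ ≤ (m + ε / 2) + ε / 2 := add_le_add_left hk1.le _
    _ = ε + m := by rw [add_assoc, ENNReal.add_halves]; ring
  exact (ENNReal.add_le_add_iff_right hm).mp hkey
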